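/- For a braided self-adjoint T with ‖T‖ ≤ 1, the kernel of P₃ = (1 + T₂)(1 + T₁ + T₁T₂) equals ker(1 + T₁) + ker(1 + T₂). -/

import Mathlib

/-- `ampl1 d T` is the amplification `T ⊗ 1` of an operator `T` on
`ℂ^d ⊗ ℂ^d` (modelled as `EuclideanSpace ℂ (Fin d × Fin d)`) to the triple
tensor power, acting on the first two tensor factors. -/
noncomputable def ampl1 (d : ℕ)
    (T : EuclideanSpace ℂ (Fin d × Fin d) →L[ℂ] EuclideanSpace ℂ (Fin d × Fin d)) :
    EuclideanSpace ℂ (Fin d × Fin d × Fin d) →L[ℂ] EuclideanSpace ℂ (Fin d × Fin d × Fin d) :=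
  LinearMap.toContinuousLinearMap
    { toFun := fun x => WithLp.toLp 2 (fun p =>
        T (WithLp.toLp 2 (fun r => x (r.1, r.2, p.2.2) : Fin d × Fin d → ℂ)) (p.1, p.2.1)
        : Fin d × Fin d × Fin d → ℂ)
      map_add' := by
        intro x y; ext p
        have : (WithLp.toLp 2 (fun r => (x + y) (r.1, r.2, p.2.2) : Fin d × Fin d → ℂ) :
            EuclideanSpace ℂ (Fin d × Fin d)) =
            (WithLp.toLp 2 (fun r => x (r.1, r.2, p.2.2) : Fin d × Fin d → ℂ) :
            EuclideanSpace ℂ (Fin d × Fin d)) +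
            WithLp.toLp 2 (fun r => y (r.1, r.2, p.2.2) : Fin d × Fin d → ℂ) := rfl
        show T _ _ = _
        rw [this, map_add]; rfl
      map_smul' := by
        intro c x; ext p
        have : (WithLp.toLp 2 (fun r => (c • x) (r.1, r.2, p.2.2) : Fin d × Fin d → ℂ) :
            EuclideanSpace ℂ (Fin d × Fin d)) =
            c • (WithLp.toLp 2 (fun r => x (r.1, r.2, p.2.2) : Fin d × Fin d → ℂ) :
            EuclideanSpace ℂ (Fin d × Fin d)) := rfl
        show T _ _ = _
        rw [this, map_smul]; rfl }

/-- `ampl2 d T` is the amplification `1 ⊗ T`, acting on the last two tensor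
factors of the triple tensor power. -/
noncomputable def ampl2 (d : ℕ)
    (T : EuclideanSpace ℂ (Fin d × Fin d) →L[ℂ] EuclideanSpace ℂ (Fin d × Fin d)) :
    EuclideanSpace ℂ (Fin d × Fin d × Fin d) →L[ℂ] EuclideanSpace ℂ (Fin d × Fin d × Fin d) :=
  LinearMap.toContinuousLinearMap
    { toFun := fun x => WithLp.toLp 2 (fun p =>
        T (WithLp.toLp 2 (fun r => x (p.1, r.1, r.2) : Fin d × Fin d → ℂ)) (p.2.1, p.2.2)
        : Fin d × Fin d × Fin d → ℂ)
      map_add' := by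
        intro x y; ext p
        have : (WithLp.toLp 2 (fun r => (x + y) (p.1, r.1, r.2) : Fin d × Fin d → ℂ) :
            EuclideanSpace ℂ (Fin d × Fin d)) =
            (WithLp.toLp 2 (fun r => x (p.1, r.1, r.2) : Fin d × Fin d → ℂ) :
            EuclideanSpace ℂ (Fin d × Fin d)) +
            WithLp.toLp 2 (fun r => y (p.1, r.1, r.2) : Fin d × Fin d → ℂ) := rfl
        show T _ _ = _
        rw [this, map_add]; rfl
      map_smul' := by
        intro c x; ext p
        have : (WithLp.toLp 2 (fun r => (c • x) (p.1, r.1, r.2) : Fin d × Fin d → ℂ) :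
            EuclideanSpace ℂ (Fin d × Fin d)) =
            c • (WithLp.toLp 2 (fun r => x (p.1, r.1, r.2) : Fin d × Fin d → ℂ) :
            EuclideanSpace ℂ (Fin d × Fin d)) := rfl
        show T _ _ = _
        rw [this, map_smul]; rfl }

/-- If `S` is a symmetric contraction and `‖S v‖ = ‖v‖`, then `S (S v) = v`. -/
lemma sq_fix {E : Type*} [NormedAddCommGroup E] [InnerProductSpace ℂ E]
    (S : E →L[ℂ] E) (hsym : ∀ x y : E, (inner ℂ (S x) y : ℂ) = inner ℂ x (S y))
    (hS : ∀ x : E, ‖S x‖ ≤ ‖x‖) {v : E} (hv : ‖S v‖ = ‖v‖) : S (S v) = v := by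
  have h1 : (inner ℂ (S (S v)) v : ℂ) = ((‖v‖ : ℂ)) ^ 2 := by
    rw [hsym]
    rw [inner_self_eq_norm_sq_to_K (𝕜 := ℂ) (S v), hv]; norm_cast
  have hre : RCLike.re (inner ℂ (S (S v)) v : ℂ) = ‖v‖ ^ 2 := by
    rw [h1]
    simp [← Complex.ofReal_pow]
  have h2 : ‖S (S v) - v‖ ^ 2 ≤ 0 := by
    rw [norm_sub_sq (𝕜 := ℂ), hre]
    have h3 : ‖S (S v)‖ ≤ ‖v‖ := le_trans (hS _) (le_of_eq hv)
    nlinarith [norm_nonneg (S (S v)), norm_nonneg v]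
  have h4 : ‖S (S v) - v‖ = 0 := by nlinarith [norm_nonneg (S (S v) - v)]
  exact sub_eq_zero.mp (norm_eq_zero.mp h4)

theorem ker_P3_abs {E : Type*} [NormedAddCommGroup E] [InnerProductSpace ℂ E]
    [FiniteDimensional ℂ E] (T₁ T₂ : E →L[ℂ] E)
    (h1 : ∀ x y : E, (inner ℂ (T₁ x) y : ℂ) = inner ℂ x (T₁ y))
    (h2 : ∀ x y : E, (inner ℂ (T₂ x) y : ℂ) = inner ℂ x (T₂ y))
    (n1 : ∀ x : E, ‖T₁ x‖ ≤ ‖x‖) (n2 : ∀ x : E, ‖T₂ x‖ ≤ ‖x‖)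
    (hbr : T₁ * T₂ * T₁ = T₂ * T₁ * T₂) :
    LinearMap.ker ((1 + T₂) ∘L (1 + T₁ + T₁ ∘L T₂)).toLinearMap =
      LinearMap.ker (1 + T₁).toLinearMap ⊔ LinearMap.ker (1 + T₂).toLinearMap := by
  have hcomp : ∀ S R : E →L[ℂ] E, S ∘L R = S * R := fun _ _ => rfl
  set P : E →L[ℂ] E := (1 + T₂) ∘L (1 + T₁ + T₁ ∘L T₂) with hP
  have hPm : P = (1 + T₂) * (1 + T₁ + T₁ * T₂) := by rw [hP, hcomp, hcomp]
  -- two factorizations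
  have idB : P = (1 + T₂) + (1 + T₂) * T₁ * (1 + T₂) := by
    rw [hPm]; noncomm_ring
  have idA : P = (1 + T₁) + (1 + T₁) * T₂ * (1 + T₁) := by
    rw [hPm]
    have expand : (1 + T₂) * (1 + T₁ + T₁ * T₂) =
        1 + T₁ + T₂ + T₁ * T₂ + T₂ * T₁ + T₂ * T₁ * T₂ := by noncomm_ring
    rw [expand, ← hbr]; noncomm_ring
  set W : Submodule ℂ E := LinearMap.ker (1 + T₁).toLinearMap ⊔ LinearMap.ker (1 + T₂).toLinearMap with hW
  -- easy direction
  have hWle : W ≤ LinearMap.ker P.toLinearMap := by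
    rw [hW]
    apply sup_le
    · intro x hx
      have hx' : (1 + T₁) x = 0 := hx
      have : P x = 0 := by
        rw [idA]
        simp only [ContinuousLinearMap.add_apply, ContinuousLinearMap.mul_apply, hx',
          map_zero, add_zero, zero_add]
      exact this
    · intro x hx
      have hx' : (1 + T₂) x = 0 := hx
      have : P x = 0 := by
        rw [idB]
        simp only [ContinuousLinearMap.add_apply, ContinuousLinearMap.mul_apply, hx',
          map_zero, add_zero, zero_add]
      exact this
  -- main: ker P ∩ Wᗮ = 0
  have hmain : ∀ y : E, P y = 0 → y ∈ Wᗮ → y = 0 := by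
    intro y hPy hyW
    have horthW : ∀ u : E, u ∈ W → (inner ℂ u y : ℂ) = 0 :=
      fun u hu => (Submodule.mem_orthogonal W y).mp hyW u hu
    set k₁ : E := y + T₁ y + T₁ (T₂ y) with hk₁def
    set k₂ : E := y + T₂ y + T₂ (T₁ y) with hk₂def
    have hk₁B : (1 + T₂) k₁ = 0 := by
      have : P y = ((1 + T₂) + (1 + T₂) * T₁ * (1 + T₂)) y := by rw [← idB]
      rw [hPy] at this
      have hexp : ((1 + T₂) + (1 + T₂) * T₁ * (1 + T₂)) y = (1 + T₂) k₁ := by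
        simp only [ContinuousLinearMap.add_apply, ContinuousLinearMap.mul_apply,
          ContinuousLinearMap.one_apply, hk₁def, map_add]
        abel
      rw [hexp] at this
      exact this.symm
    have hk₂A : (1 + T₁) k₂ = 0 := by
      have : P y = ((1 + T₁) + (1 + T₁) * T₂ * (1 + T₁)) y := by rw [← idA]
      rw [hPy] at this
      have hexp : ((1 + T₁) + (1 + T₁) * T₂ * (1 + T₁)) y = (1 + T₁) k₂ := by
        simp only [ContinuousLinearMap.add_apply, ContinuousLinearMap.mul_apply,
          ContinuousLinearMap.one_apply, hk₂def, map_add]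
        abel
      rw [hexp] at this
      exact this.symm
    have hk₁W : k₁ ∈ W := hW ▸ Submodule.mem_sup_right hk₁B
    have hk₂W : k₂ ∈ W := hW ▸ Submodule.mem_sup_left hk₂A
    have hT₂k₁ : T₂ k₁ = -k₁ := by
      have h := hk₁B
      simp only [ContinuousLinearMap.add_apply, ContinuousLinearMap.one_apply] at h
      linear_combination (norm := module) h
    have hT₁k₂ : T₁ k₂ = -k₂ := by
      have h := hk₂A
      simp only [ContinuousLinearMap.add_apply, ContinuousLinearMap.one_apply] at h
      linear_combination (norm := module) h
    have e3 : T₁ (T₂ (T₁ y)) = y - (k₁ + k₂) := by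
      have h := hT₁k₂
      rw [hk₂def, map_add, map_add] at h
      rw [hk₁def, hk₂def]
      linear_combination (norm := module) h
    have e4 : T₂ (T₁ (T₂ y)) = y - (k₁ + k₂) := by
      have h := hT₂k₁
      rw [hk₁def, map_add, map_add] at h
      rw [hk₁def, hk₂def]
      linear_combination (norm := module) h
    have horth : (inner ℂ (k₁ + k₂) y : ℂ) = 0 := by
      rw [inner_add_left, horthW k₁ hk₁W, horthW k₂ hk₂W, add_zero]
    have hnormeq : ‖y - (k₁ + k₂)‖ ^ 2 = ‖y‖ ^ 2 + ‖k₁ + k₂‖ ^ 2 := by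
      rw [norm_sub_sq (𝕜 := ℂ), inner_eq_zero_symm.mpr horth]
      simp [map_zero]
    have chain1 : ‖T₁ (T₂ (T₁ y))‖ ≤ ‖y‖ := le_trans (n1 _) (le_trans (n2 _) (n1 _))
    have hk12 : k₁ + k₂ = 0 := by
      have h5 : ‖y‖ ^ 2 + ‖k₁ + k₂‖ ^ 2 ≤ ‖y‖ ^ 2 := by
        rw [← hnormeq, ← e3]
        have := chain1
        nlinarith [norm_nonneg (T₁ (T₂ (T₁ y))), norm_nonneg y]
      have : ‖k₁ + k₂‖ = 0 := by nlinarith [norm_nonneg (k₁ + k₂)]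
      exact norm_eq_zero.mp this
    rw [hk12, sub_zero] at e3 e4
    have hn1 : ‖T₁ y‖ = ‖y‖ := by
      refine le_antisymm (n1 y) ?_
      calc ‖y‖ = ‖T₁ (T₂ (T₁ y))‖ := by rw [e3]
        _ ≤ ‖T₂ (T₁ y)‖ := n1 _
        _ ≤ ‖T₁ y‖ := n2 _
    have hn21 : ‖T₂ (T₁ y)‖ = ‖T₁ y‖ := by
      refine le_antisymm (n2 _) ?_
      calc ‖T₁ y‖ = ‖y‖ := hn1
        _ = ‖T₁ (T₂ (T₁ y))‖ := by rw [e3]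
        _ ≤ ‖T₂ (T₁ y)‖ := n1 _
    have hn2 : ‖T₂ y‖ = ‖y‖ := by
      refine le_antisymm (n2 y) ?_
      calc ‖y‖ = ‖T₂ (T₁ (T₂ y))‖ := by rw [e4]
        _ ≤ ‖T₁ (T₂ y)‖ := n2 _
        _ ≤ ‖T₂ y‖ := n1 _
    have hn12 : ‖T₁ (T₂ y)‖ = ‖T₂ y‖ := by
      refine le_antisymm (n1 _) ?_
      calc ‖T₂ y‖ = ‖y‖ := hn2
        _ = ‖T₂ (T₁ (T₂ y))‖ := by rw [e4]
        _ ≤ ‖T₁ (T₂ y)‖ := n2 _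
    have q1 : T₁ (T₁ y) = y := sq_fix T₁ h1 n1 hn1
    have q2 : T₂ (T₂ y) = y := sq_fix T₂ h2 n2 hn2
    have q3 : T₁ (T₁ (T₂ y)) = T₂ y := sq_fix T₁ h1 n1 hn12
    have q4 : T₂ (T₂ (T₁ y)) = T₁ y := sq_fix T₂ h2 n2 hn21
    have e5 : T₁ k₁ = y + T₁ y + T₂ y := by
      rw [hk₁def, map_add, map_add, q1, q3]
      module
    have e6 : T₂ k₂ = y + T₁ y + T₂ y := by
      rw [hk₂def, map_add, map_add, q2, q4]
      module
    have hk₂eq : k₂ = -k₁ := by linear_combination (norm := module) hk12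
    have hk₁s : k₁ = y + T₁ y + T₂ y := by
      have h := e6
      rw [hk₂eq, map_neg, hT₂k₁, neg_neg] at h
      exact h
    have hs0 : y + T₁ y + T₂ y = 0 := by
      have h := hT₁k₂
      rw [hk₂eq, map_neg, e5] at h
      -- h : -(y + T₁ y + T₂ y) = -(-k₁) ; i.e. -(s) = k₁ = s
      rw [neg_neg, hk₁s] at h
      linear_combination (norm := module) (-(1/2 : ℂ)) • h
    have hyA : y - T₁ y ∈ LinearMap.ker (1 + T₁).toLinearMap := by
      have : (1 + T₁) (y - T₁ y) = 0 := by
        simp only [ContinuousLinearMap.add_apply, ContinuousLinearMap.one_apply, map_sub, q1]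
        module
      exact this
    have hyB : y - T₂ y ∈ LinearMap.ker (1 + T₂).toLinearMap := by
      have : (1 + T₂) (y - T₂ y) = 0 := by
        simp only [ContinuousLinearMap.add_apply, ContinuousLinearMap.one_apply, map_sub, q2]
        module
      exact this
    have o1 : (inner ℂ (T₁ y) y : ℂ) = inner ℂ y y := by
      have := horthW _ (hW ▸ Submodule.mem_sup_left hyA)
      rw [inner_sub_left, sub_eq_zero] at this
      exact this.symm
    have o2 : (inner ℂ (T₂ y) y : ℂ) = inner ℂ y y := by
      have := horthW _ (hW ▸ Submodule.mem_sup_right hyB)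
      rw [inner_sub_left, sub_eq_zero] at this
      exact this.symm
    have : (3 : ℂ) * inner ℂ y y = 0 := by
      have h := congrArg (fun v : E => (inner ℂ v y : ℂ)) hs0
      simp only [inner_add_left, inner_zero_left, o1, o2] at h
      linear_combination h
    have hyy : (inner ℂ y y : ℂ) = 0 :=
      (mul_eq_zero.mp this).resolve_left (by norm_num)
    exact inner_self_eq_zero.mp hyy
  -- assemble
  refine le_antisymm ?_ hWle
  intro x hx
  obtain ⟨w, hw, z, hz, hxwz⟩ := W.exists_add_mem_mem_orthogonal x
  have hPx : P x = 0 := hx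
  have hPw : P w = 0 := hWle hw
  have hPz : P z = 0 := by
    have : x = w + z := hxwz
    have h := hPx
    rw [this, map_add, hPw, zero_add] at h
    exact h
  have hz0 : z = 0 := hmain z hPz hz
  rw [hxwz, hz0, add_zero]
  exact hw

variable {d : ℕ}

/-- slice of a triple-index vector over the last coordinate -/
def slice1 (x : EuclideanSpace ℂ (Fin d × Fin d × Fin d)) (k : Fin d) :
    EuclideanSpace ℂ (Fin d × Fin d) := WithLp.toLp 2 (fun r => x (r.1, r.2, k) : Fin d × Fin d → ℂ)

/-- slice over the first coordinate -/
def slice2 (x : EuclideanSpace ℂ (Fin d × Fin d × Fin d)) (i : Fin d) :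
    EuclideanSpace ℂ (Fin d × Fin d) := WithLp.toLp 2 (fun r => x (i, r.1, r.2) : Fin d × Fin d → ℂ)

lemma slice1_ampl1 (T : EuclideanSpace ℂ (Fin d × Fin d) →L[ℂ] EuclideanSpace ℂ (Fin d × Fin d))
    (x : EuclideanSpace ℂ (Fin d × Fin d × Fin d)) (k : Fin d) :
    slice1 (ampl1 d T x) k = T (slice1 x k) := rfl

lemma slice2_ampl2 (T : EuclideanSpace ℂ (Fin d × Fin d) →L[ℂ] EuclideanSpace ℂ (Fin d × Fin d))
    (x : EuclideanSpace ℂ (Fin d × Fin d × Fin d)) (i : Fin d) :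
    slice2 (ampl2 d T x) i = T (slice2 x i) := rfl

lemma inner_eq_sum1 (v w : EuclideanSpace ℂ (Fin d × Fin d × Fin d)) :
    (inner ℂ v w : ℂ) = ∑ k : Fin d, (inner ℂ (slice1 v k) (slice1 w k) : ℂ) := by
  simp only [PiLp.inner_apply, RCLike.inner_apply']
  exact (Fintype.sum_equiv ⟨fun p : Fin d × Fin d × Fin d => (p.2.2, p.1, p.2.1),
    fun q : Fin d × Fin d × Fin d => (q.2.1, q.2.2, q.1), fun p => rfl, fun q => rfl⟩ _
    (fun q : Fin d × (Fin d × Fin d) => (starRingEnd ℂ) (slice1 v q.1 q.2) * slice1 w q.1 q.2)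
    (fun p => rfl)).trans (Fintype.sum_prod_type _)

lemma inner_eq_sum2 (v w : EuclideanSpace ℂ (Fin d × Fin d × Fin d)) :
    (inner ℂ v w : ℂ) = ∑ i : Fin d, (inner ℂ (slice2 v i) (slice2 w i) : ℂ) := by
  simp only [PiLp.inner_apply, RCLike.inner_apply']
  exact (Fintype.sum_equiv (Equiv.refl _) _
    (fun q : Fin d × (Fin d × Fin d) => (starRingEnd ℂ) (slice2 v q.1 q.2) * slice2 w q.1 q.2)
    (fun p => rfl)).trans (Fintype.sum_prod_type _)

lemma norm_sq_eq1 (v : EuclideanSpace ℂ (Fin d × Fin d × Fin d)) :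
    ‖v‖ ^ 2 = ∑ k : Fin d, ‖slice1 v k‖ ^ 2 := by
  have h := congrArg Complex.re (inner_eq_sum1 v v)
  simp only [Complex.re_sum] at h
  rw [← inner_self_eq_norm_sq (𝕜 := ℂ) v]
  rw [show (RCLike.re (inner ℂ v v : ℂ)) = (inner ℂ v v : ℂ).re from rfl, h]
  exact Finset.sum_congr rfl fun k _ => by
    rw [show ((inner ℂ (slice1 v k) (slice1 v k) : ℂ)).re
      = RCLike.re (inner ℂ (slice1 v k) (slice1 v k) : ℂ) from rfl,
      inner_self_eq_norm_sq]

lemma norm_sq_eq2 (v : EuclideanSpace ℂ (Fin d × Fin d × Fin d)) :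
    ‖v‖ ^ 2 = ∑ i : Fin d, ‖slice2 v i‖ ^ 2 := by
  have h := congrArg Complex.re (inner_eq_sum2 v v)
  simp only [Complex.re_sum] at h
  rw [← inner_self_eq_norm_sq (𝕜 := ℂ) v]
  rw [show (RCLike.re (inner ℂ v v : ℂ)) = (inner ℂ v v : ℂ).re from rfl, h]
  exact Finset.sum_congr rfl fun i _ => by
    rw [show ((inner ℂ (slice2 v i) (slice2 v i) : ℂ)).re
      = RCLike.re (inner ℂ (slice2 v i) (slice2 v i) : ℂ) from rfl,
      inner_self_eq_norm_sq]

lemma sym_ampl1 (T : EuclideanSpace ℂ (Fin d × Fin d) →L[ℂ] EuclideanSpace ℂ (Fin d × Fin d))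
    (hsa : IsSelfAdjoint T) (x w : EuclideanSpace ℂ (Fin d × Fin d × Fin d)) :
    (inner ℂ (ampl1 d T x) w : ℂ) = inner ℂ x (ampl1 d T w) := by
  rw [inner_eq_sum1, inner_eq_sum1]
  refine Finset.sum_congr rfl fun k _ => ?_
  rw [slice1_ampl1, slice1_ampl1]
  conv_lhs => rw [← hsa.adjoint_eq]
  exact ContinuousLinearMap.adjoint_inner_left T (slice1 w k) (slice1 x k)

lemma sym_ampl2 (T : EuclideanSpace ℂ (Fin d × Fin d) →L[ℂ] EuclideanSpace ℂ (Fin d × Fin d))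
    (hsa : IsSelfAdjoint T) (x w : EuclideanSpace ℂ (Fin d × Fin d × Fin d)) :
    (inner ℂ (ampl2 d T x) w : ℂ) = inner ℂ x (ampl2 d T w) := by
  rw [inner_eq_sum2, inner_eq_sum2]
  refine Finset.sum_congr rfl fun i _ => ?_
  rw [slice2_ampl2, slice2_ampl2]
  conv_lhs => rw [← hsa.adjoint_eq]
  exact ContinuousLinearMap.adjoint_inner_left T (slice2 w i) (slice2 x i)

lemma contract1 (T : EuclideanSpace ℂ (Fin d × Fin d) →L[ℂ] EuclideanSpace ℂ (Fin d × Fin d))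
    (hn : ‖T‖ ≤ 1) (x : EuclideanSpace ℂ (Fin d × Fin d × Fin d)) :
    ‖ampl1 d T x‖ ≤ ‖x‖ := by
  have hsq : ‖ampl1 d T x‖ ^ 2 ≤ ‖x‖ ^ 2 := by
    rw [norm_sq_eq1, norm_sq_eq1 x]
    refine Finset.sum_le_sum fun k _ => ?_
    rw [slice1_ampl1]
    have h1 : ‖T (slice1 x k)‖ ≤ ‖slice1 x k‖ :=
      le_trans (T.le_opNorm _) (by nlinarith [norm_nonneg (slice1 x k)])
    exact pow_le_pow_left₀ (norm_nonneg _) h1 2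
  nlinarith [norm_nonneg (ampl1 d T x), norm_nonneg x]

lemma contract2 (T : EuclideanSpace ℂ (Fin d × Fin d) →L[ℂ] EuclideanSpace ℂ (Fin d × Fin d))
    (hn : ‖T‖ ≤ 1) (x : EuclideanSpace ℂ (Fin d × Fin d × Fin d)) :
    ‖ampl2 d T x‖ ≤ ‖x‖ := by
  have hsq : ‖ampl2 d T x‖ ^ 2 ≤ ‖x‖ ^ 2 := by
    rw [norm_sq_eq2, norm_sq_eq2 x]
    refine Finset.sum_le_sum fun i _ => ?_
    rw [slice2_ampl2]
    have h1 : ‖T (slice2 x i)‖ ≤ ‖slice2 x i‖ :=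
      le_trans (T.le_opNorm _) (by nlinarith [norm_nonneg (slice2 x i)])
    exact pow_le_pow_left₀ (norm_nonneg _) h1 2
  nlinarith [norm_nonneg (ampl2 d T x), norm_nonneg x]

/-- For a braided self-adjoint `T` with `‖T‖ ≤ 1`, the kernel of
`P₃ = (1 + T₂)(1 + T₁ + T₁T₂)` equals `ker (1 + T₁) + ker (1 + T₂)`. -/
theorem ker_P3_of_braided (d : ℕ) (hd : 1 ≤ d)
    (T : EuclideanSpace ℂ (Fin d × Fin d) →L[ℂ] EuclideanSpace ℂ (Fin d × Fin d))
    (hsa : IsSelfAdjoint T) (hn : ‖T‖ ≤ 1)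
    (hbraid : ampl1 d T ∘L ampl2 d T ∘L ampl1 d T = ampl2 d T ∘L ampl1 d T ∘L ampl2 d T) :
    LinearMap.ker ((1 + ampl2 d T) ∘L (1 + ampl1 d T + ampl1 d T ∘L ampl2 d T)).toLinearMap =
      LinearMap.ker (1 + ampl1 d T).toLinearMap ⊔ LinearMap.ker (1 + ampl2 d T).toLinearMap := by
  have hbr : ampl1 d T * ampl2 d T * ampl1 d T = ampl2 d T * ampl1 d T * ampl2 d T := by
    calc ampl1 d T * ampl2 d T * ampl1 d T
        = ampl1 d T ∘L ampl2 d T ∘L ampl1 d T := ContinuousLinearMap.comp_assoc _ _ _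
      _ = ampl2 d T ∘L ampl1 d T ∘L ampl2 d T := hbraid
      _ = ampl2 d T * ampl1 d T * ampl2 d T := (ContinuousLinearMap.comp_assoc _ _ _).symm
  exact ker_P3_abs (ampl1 d T) (ampl2 d T) (sym_ampl1 T hsa) (sym_ampl2 T hsa)
    (contract1 T hn) (contract2 T hn) hbr
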